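/- Commutator relation in the twisted algebra S: let H = ℚ[z₁, z₂, …] with derivation ∂ (∂z_j = z_{j-1} for j > 1, ∂z₁ = r), and consider operators on solution sequences: t(P)_i = P_{i-1} (shift, with t(P)₀ = 0) and z_j(P)_i = ∑_{k≥0} (-1)^k binom(i+k, k) P_{i+k} z_{j-k} (with z₀ = r and z_{j-k} = 0 for j-k < 0). Then t ∘ z_j - z_j ∘ t = z_{j-1} as operators on solution sequences (sequences with ∂P_i = P_{i-1}, P_{-1}=0). -/

import Mathlib

open MvPolynomial

/-- In `H = ℚ[z₁, z₂, …]`, `zGen r k` denotes `z_k`, with `z₀ = r` a scalar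
(variable `X (k-1)` stands for `z_k` for `k ≥ 1`). -/
noncomputable def zGen (r : ℚ) : ℕ → MvPolynomial ℕ ℚ
  | 0 => C r
  | k + 1 => X k

/-- The shift operator `t` on sequences: `t(P)₀ = 0`, `t(P)_i = P_{i-1}`. -/
noncomputable def tOp (P : ℕ → MvPolynomial ℕ ℚ) : ℕ → MvPolynomial ℕ ℚ
  | 0 => 0
  | i + 1 => P i

/-- The operator `z_j` on sequences:
`z_j(P)_i = ∑_{k} (-1)^k binom(i+k,k) P_{i+k} z_{j-k}` (with `z_{j-k} = 0` for
`j-k < 0`, so the sum runs over `0 ≤ k ≤ j`). -/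
noncomputable def zOp (r : ℚ) (j : ℕ) (P : ℕ → MvPolynomial ℕ ℚ) (i : ℕ) :
    MvPolynomial ℕ ℚ :=
  ∑ k ∈ Finset.range (j + 1),
    C ((-1 : ℚ) ^ k * (Nat.choose (i + k) k : ℚ)) * (P (i + k) * zGen r (j - k))

/-- Commutator relation in the twisted algebra `S`: on solution sequences
(`∂P_i = P_{i-1}`, `P_{-1} = 0`) we have `t ∘ z_j - z_j ∘ t = z_{j-1}`. -/
theorem commutator_t_zj (r : ℚ)
    (D : Derivation ℚ (MvPolynomial ℕ ℚ) (MvPolynomial ℕ ℚ))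
    (hD1 : D (X 0) = C r) (hD : ∀ j : ℕ, D (X (j + 1)) = X j)
    (P : ℕ → MvPolynomial ℕ ℚ)
    (hP0 : D (P 0) = 0) (hP : ∀ i : ℕ, D (P (i + 1)) = P i) :
    ∀ (j i : ℕ),
      tOp (zOp r (j + 1) P) i - zOp r (j + 1) (tOp P) i = zOp r j P i := by

  intro j i
  match i with
  | 0 =>
    show (0 : MvPolynomial ℕ ℚ) - _ = _
    rw [zOp, zOp, Finset.sum_range_succ' _ (j + 1)]
    have h0 : tOp P (0 + 0) = 0 := rfl
    rw [h0, zero_sub, zero_mul, mul_zero, add_zero, ← Finset.sum_neg_distrib]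
    apply Finset.sum_congr rfl
    intro k hk
    have h1 : tOp P (0 + (k + 1)) = P (0 + k) := rfl
    rw [h1]
    have h2 : (j + 1) - (k + 1) = j - k := Nat.succ_sub_succ j k
    rw [h2]
    have h3 : ((-1 : ℚ) ^ (k + 1) * ((0 + (k + 1)).choose (k + 1) : ℚ))
        = -((-1 : ℚ) ^ k * ((0 + k).choose k : ℚ)) := by
      rw [Nat.zero_add, Nat.zero_add, Nat.choose_self, Nat.choose_self]
      ring
    rw [h3, map_neg, neg_mul, neg_neg]
  | m + 1 =>
    show zOp r (j + 1) P m - _ = _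
    rw [zOp, zOp, zOp, Finset.sum_range_succ' _ (j + 1),
        Finset.sum_range_succ' _ (j + 1)]
    have hb : (C ((-1 : ℚ) ^ 0 * ((m + 0).choose 0 : ℚ)) :
          MvPolynomial ℕ ℚ) * (P (m + 0) * zGen r (j + 1 - 0))
        = C ((-1 : ℚ) ^ 0 * (((m + 1) + 0).choose 0 : ℚ))
          * (tOp P ((m + 1) + 0) * zGen r (j + 1 - 0)) := by
      have : tOp P ((m + 1) + 0) = P (m + 0) := rfl
      rw [this, Nat.choose_zero_right, Nat.choose_zero_right]
    rw [hb, add_sub_add_right_eq_sub, ← Finset.sum_sub_distrib]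
    apply Finset.sum_congr rfl
    intro k hk
    have h1 : tOp P ((m + 1) + (k + 1)) = P (m + (k + 1)) := by
      have e : (m + 1) + (k + 1) = (m + (k + 1)) + 1 := by omega
      rw [e]; rfl
    rw [h1]
    have h2 : (j + 1) - (k + 1) = j - k := Nat.succ_sub_succ j k
    rw [h2]
    have h4 : m + (k + 1) = (m + 1) + k := by omega
    rw [h4]
    rw [← sub_mul, ← map_sub]
    congr 1
    have h5 : ((m + 1) + (k + 1)).choose (k + 1)
        = ((m + 1) + k).choose k + ((m + 1) + k).choose (k + 1) := by
      have e : (m + 1) + (k + 1) = ((m + 1) + k) + 1 := by omega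
      rw [e, Nat.choose_succ_succ]
    rw [h5]
    push_cast
    ring
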